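/- arXiv:1205.4177 — 2 statements merged into one kernel-verified Lean document; each statement's English description precedes it below -/
import Mathlib

section
/- Let G be a topological group admitting a connected open neighborhood of the identity, let X ⊆ G be clopen with e ∈ X, and let H(X) = {g ∈ X : g·X = X}. Then H(X) is an open (hence clopen) subgroup of G. -/
/-- Let `G` be a topological group admitting a connected open neighborhood of the
identity, let `X ⊆ G` be clopen with `1 ∈ X`, and let `H(X) = {g ∈ X : g·X = X}`.
Then `H(X)` is an open (hence clopen) subgroup of `G`. -/
theorem stmt_2 {G : Type*} [Group G] [TopologicalSpace G] [IsTopologicalGroup G]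
    (hconn : ∃ V : Set G, IsOpen V ∧ IsConnected V ∧ (1 : G) ∈ V)
    (X : Set G) (hX : IsClopen X) (h1 : (1 : G) ∈ X) :
    ∃ H : Subgroup G, (H : Set G) = {g | g ∈ X ∧ (fun x => g * x) '' X = X} ∧
      IsOpen (H : Set G) ∧ IsClopen (H : Set G) := by
  obtain ⟨V, hVo, hVc, h1V⟩ := hconn
  -- key: for v ∈ V, v * x ∈ X ↔ x ∈ X
  have key : ∀ v ∈ V, ∀ x : G, v * x ∈ X ↔ x ∈ X := by
    intro v hv x
    have hW : IsClopen ((fun g : G => g * x) ⁻¹' X) :=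
      hX.preimage (continuous_id.mul continuous_const)
    by_cases hx : x ∈ X
    · have hsub : V ⊆ (fun g : G => g * x) ⁻¹' X :=
        hVc.isPreconnected.subset_isClopen hW ⟨1, h1V, by simpa using hx⟩
      exact ⟨fun _ => hx, fun _ => hsub hv⟩
    · have hsub : V ⊆ ((fun g : G => g * x) ⁻¹' X)ᶜ :=
        hVc.isPreconnected.subset_isClopen hW.compl ⟨1, h1V, by simpa using hx⟩
      exact ⟨fun h => absurd h (hsub hv), fun h => absurd h hx⟩
  have keyImg : ∀ v ∈ V, (fun x => v * x) '' X = X := by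
    intro v hv
    ext y
    constructor
    · rintro ⟨x, hx, rfl⟩; exact (key v hv x).2 hx
    · intro hy
      exact ⟨v⁻¹ * y, (key v hv _).1 (by simpa using hy), by simp⟩
  set S : Set G := {g | g ∈ X ∧ (fun x => g * x) '' X = X} with hS
  have himg : ∀ g ∈ S, ∀ h ∈ S, (fun x => g * h * x) '' X = X := by
    rintro g ⟨hgX, hgI⟩ h ⟨hhX, hhI⟩
    calc (fun x => g * h * x) '' X = (fun x => g * x) '' ((fun x => h * x) '' X) := by
          rw [Set.image_image]; simp [mul_assoc]
      _ = X := by rw [hhI, hgI]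
  have hmul : ∀ g ∈ S, ∀ h ∈ S, g * h ∈ S := by
    intro g hg h hh
    refine ⟨?_, himg g hg h hh⟩
    rw [← hg.2]
    exact ⟨h, hh.1, rfl⟩
  have hinv : ∀ g ∈ S, g⁻¹ ∈ S := by
    rintro g ⟨hgX, hgI⟩
    have hI : (fun x => g⁻¹ * x) '' X = X := by
      conv_lhs => rw [← hgI]
      rw [Set.image_image]; simp
    exact ⟨by rw [← hI]; exact ⟨1, h1, by simp⟩, hI⟩
  have hopen : IsOpen S := by
    have hVS : V ⊆ S := fun v hv =>
      ⟨by have := (key v hv 1).2 h1; simpa using this, keyImg v hv⟩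
    have : S = ⋃ g ∈ S, (fun x => g * x) '' V := by
      ext y
      simp only [Set.mem_iUnion]
      constructor
      · intro hy; exact ⟨y, hy, 1, h1V, by simp⟩
      · rintro ⟨g, hg, v, hv, rfl⟩
        exact hmul g hg v (hVS hv)
    rw [this]
    refine isOpen_biUnion fun g _ => ?_
    have := (Homeomorph.mulLeft g).isOpenMap V hVo
    simpa using this
  refine ⟨⟨⟨⟨S, fun {a b} ha hb => hmul a ha b hb⟩, ⟨h1, by simp⟩⟩,
    fun {g} hg => hinv g hg⟩, rfl, hopen, ?_, hopen⟩
  exact Subgroup.isClosed_of_isOpen _ hopen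
end

section
/- Let A be a nonzero finite-dimensional associative ℝ-algebra with no zero divisors whose center contains ℝ. Then A is isomorphic as an ℝ-algebra to ℝ, ℂ, or the quaternions ℍ; in particular its dimension over ℝ is 1, 2, or 4. -/
set_option linter.unusedSectionVars false
set_option maxHeartbeats 1000000

section FrobeniusAux

variable {A : Type*} [Ring A] [IsDomain A] [Algebra ℝ A] [FiniteDimensional ℝ A]

lemma frob_quad (x : A) (hx : x ∉ Set.range (algebraMap ℝ A)) :
    ∃ b c : ℝ, x * x + b • x + c • (1 : A) = 0 := by
  have hint : IsIntegral ℝ x := IsIntegral.of_finite ℝ x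
  have hmon := minpoly.monic hint
  have hirr := minpoly.irreducible hint
  have hle : (minpoly ℝ x).natDegree ≤ 2 := hirr.natDegree_le_two
  have hpos : 0 < (minpoly ℝ x).natDegree := minpoly.natDegree_pos hint
  have haev : (Polynomial.aeval x) (minpoly ℝ x) = 0 := minpoly.aeval ℝ x
  rw [Polynomial.aeval_eq_sum_range] at haev
  interval_cases h : (minpoly ℝ x).natDegree
  · exfalso
    have hc1 : (minpoly ℝ x).coeff 1 = 1 := by
      have := hmon.coeff_natDegree; rwa [h] at this
    simp [Finset.sum_range_succ, hc1] at haev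
    exact hx ⟨-((minpoly ℝ x).coeff 0), by
      rw [Algebra.algebraMap_eq_smul_one, neg_smul]
      linear_combination (norm := module) -haev⟩
  · refine ⟨(minpoly ℝ x).coeff 1, (minpoly ℝ x).coeff 0, ?_⟩
    have hc2 : (minpoly ℝ x).coeff 2 = 1 := by
      have := hmon.coeff_natDegree; rwa [h] at this
    simp [Finset.sum_range_succ, hc2, pow_two] at haev
    linear_combination (norm := module) haev

lemma frob_expand (x : A) (α β : ℝ) :
    (x + α • (1:A)) * (x + β • (1:A)) = x * x + (α + β) • x + (α * β) • (1:A) := by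
  simp only [mul_add, add_mul, smul_mul_assoc, mul_smul_comm, smul_smul, one_mul, mul_one,
    add_smul]
  module

lemma frob_sqrt (x : A) (hx : x ∉ Set.range (algebraMap ℝ A)) :
    ∃ (r s : ℝ) (u : A), u * u = -1 ∧ s ≠ 0 ∧ x = r • (1 : A) + s • u := by
  obtain ⟨b, c, hbc⟩ := frob_quad x hx
  set D : ℝ := b ^ 2 / 4 - c with hD
  rcases le_or_gt 0 D with hDpos | hDneg
  · exfalso
    set s := Real.sqrt D with hs
    have hs2 : s * s = D := Real.mul_self_sqrt hDpos
    have key : (x + (b/2 - s) • (1:A)) * (x + (b/2 + s) • (1:A)) = 0 := by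
      rw [frob_expand]
      have h1 : b/2 - s + (b/2 + s) = b := by ring
      have h2 : (b/2 - s) * (b/2 + s) = c := by
        have : (b/2 - s) * (b/2 + s) = b^2/4 - s * s := by ring
        rw [this, hs2, hD]; ring
      rw [h1, h2, hbc]
    rcases mul_eq_zero.1 key with h | h
    · refine hx ⟨-(b/2 - s), ?_⟩
      rw [Algebra.algebraMap_eq_smul_one]
      linear_combination (norm := module) -h
    · refine hx ⟨-(b/2 + s), ?_⟩
      rw [Algebra.algebraMap_eq_smul_one]
      linear_combination (norm := module) -h
  · set d := Real.sqrt (-D) with hdd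
    have hd : 0 < d := Real.sqrt_pos.2 (by linarith)
    have hd2 : d * d = -D := Real.mul_self_sqrt (by linarith)
    refine ⟨-(b/2), d, d⁻¹ • (x + (b/2) • (1:A)), ?_, hd.ne', ?_⟩
    · have hsq : (x + (b/2) • (1:A)) * (x + (b/2) • (1:A)) = D • (1:A) := by
        rw [frob_expand]
        have h1 : b/2 + b/2 = b := by ring
        have h2 : b/2 * (b/2) = b^2/4 := by ring
        rw [h1, h2]
        linear_combination (norm := module) hbc + congrArg (· • (1:A)) (by ring : b^2/4 = D + c)
      rw [smul_mul_assoc, mul_smul_comm, smul_smul, hsq, smul_smul]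
      have : d⁻¹ * d⁻¹ * D = -1 := by
        field_simp
        linarith [hd2]
      rw [this, neg_smul, one_smul]
    · rw [smul_smul, mul_inv_cancel₀ hd.ne', one_smul]
      module

theorem frob_aux :
    Nonempty (A ≃ₐ[ℝ] ℝ) ∨ Nonempty (A ≃ₐ[ℝ] ℂ) ∨ Nonempty (A ≃ₐ[ℝ] Quaternion ℝ) := by
  have hinj : Function.Injective (algebraMap ℝ A) := (algebraMap ℝ A).injective
  haveI : NoZeroSMulDivisors ℝ A := inferInstance
  by_cases hall : ∀ y : A, y ∈ Set.range (algebraMap ℝ A)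
  · left
    refine ⟨(AlgEquiv.ofBijective (Algebra.ofId ℝ A) ⟨hinj, fun y => ?_⟩).symm⟩
    obtain ⟨t, ht⟩ := hall y
    exact ⟨t, by rwa [Algebra.ofId_apply]⟩
  push_neg at hall
  obtain ⟨x, hx⟩ := hall
  obtain ⟨r, s, i, hi2, hs, hxr⟩ := frob_sqrt x hx
  have hine : (i : A) ≠ 0 := by
    intro h
    rw [h, zero_mul] at hi2
    exact one_ne_zero (neg_eq_zero.1 hi2.symm)
  -- everything commuting with i lies in span {1, i}
  have hP : ∀ y : A, y * i = i * y → ∃ a b : ℝ, y = a • (1:A) + b • i := by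
    intro y hy
    by_cases hyr : y ∈ Set.range (algebraMap ℝ A)
    · obtain ⟨t, ht⟩ := hyr
      exact ⟨t, 0, by rw [← ht, Algebra.algebraMap_eq_smul_one, zero_smul, add_zero]⟩
    · obtain ⟨r', s', u, hu2, hs', hyu⟩ := frob_sqrt y hyr
      have hu : u = s'⁻¹ • (y - r' • (1:A)) := by
        rw [hyu, add_sub_cancel_left, smul_smul, inv_mul_cancel₀ hs', one_smul]
      have hcomm : u * i = i * u := by
        rw [hu]
        simp only [smul_mul_assoc, mul_smul_comm, sub_mul, mul_sub, one_mul, mul_one, hy]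
      have key : (u - i) * (u + i) = 0 := by
        rw [sub_mul, mul_add, mul_add, hu2, hi2, hcomm]
        abel
      rcases mul_eq_zero.1 key with h | h
      · have hui : u = i := sub_eq_zero.1 h
        exact ⟨r', s', by rw [hyu, hui]⟩
      · have hui : u = -i := eq_neg_of_add_eq_zero_left h
        exact ⟨r', -s', by rw [hyu, hui, smul_neg, neg_smul]⟩
  by_cases hcen : ∀ z : A, z * i = i * z
  · right; left
    set f := Complex.liftAux i hi2 with hf
    have hsurj : Function.Surjective f := by
      intro y
      obtain ⟨a, b, hab⟩ := hP y (hcen y)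
      refine ⟨⟨a, b⟩, ?_⟩
      rw [hf, Complex.liftAux_apply, Algebra.algebraMap_eq_smul_one, hab]
    exact ⟨(AlgEquiv.ofBijective f ⟨f.toRingHom.injective, hsurj⟩).symm⟩
  · right; right
    push_neg at hcen
    obtain ⟨w, hw⟩ := hcen
    set z := i * w * i + w with hz
    have hiz : i * z = i * w - w * i := by
      have h1 : i * (i * w * i + w) = (i * i) * (w * i) + i * w := by noncomm_ring
      rw [hz, h1, hi2]
      noncomm_ring
    have hzi4 : z * i = w * i - i * w := by
      have h1 : (i * w * i + w) * i = (i * w) * (i * i) + w * i := by noncomm_ring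
      rw [hz, h1, hi2]
      noncomm_ring
    have hzi' : z * i = -(i * z) := by rw [hiz, hzi4, neg_sub]
    have hzne : z ≠ 0 := by
      intro h
      rw [h, mul_zero] at hiz
      exact hw (sub_eq_zero.1 hiz.symm).symm
    have hzine : z * i ≠ 0 := fun h => by
      rcases mul_eq_zero.1 h with h1 | h1
      exacts [hzne h1, hine h1]
    -- z * z is a negative real scalar
    have hzz : (z * z) * i = i * (z * z) := by
      calc (z * z) * i = z * (z * i) := mul_assoc _ _ _
        _ = -(z * (i * z)) := by rw [hzi', mul_neg]
        _ = -((z * i) * z) := by rw [mul_assoc]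
        _ = (i * z) * z := by rw [hzi', neg_mul, neg_neg]
        _ = i * (z * z) := mul_assoc _ _ _
    obtain ⟨a, bb, hab⟩ := hP (z * z) hzz
    have hb0 : bb = 0 := by
      have h1 : z * (z * z) = (z * z) * z := by rw [mul_assoc]
      rw [hab] at h1
      simp only [mul_add, add_mul, mul_smul_comm, smul_mul_assoc, mul_one, one_mul] at h1
      have hiz2 : i * z = -(z * i) := by rw [hzi', neg_neg]
      rw [hiz2, smul_neg] at h1
      have h2 : (bb + bb) • (z * i) = 0 := by
        linear_combination (norm := module) h1
      rcases smul_eq_zero.1 h2 with h3 | h3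
      · linarith
      · exact absurd h3 hzine
    rw [hb0, zero_smul, add_zero] at hab
    have hexp : ∀ (v : A) (α β : ℝ),
        (v + α • (1:A)) * (v + β • (1:A)) = v * v + (α + β) • v + (α * β) • (1:A) := by
      intro v α β
      simp only [mul_add, add_mul, smul_mul_assoc, mul_smul_comm, smul_smul, one_mul, mul_one,
        add_smul]
      module
    have ha : a < 0 := by
      by_contra hge
      push_neg at hge
      set s2 := Real.sqrt a with hs2d
      have hs2 : s2 * s2 = a := Real.mul_self_sqrt hge
      have key : (z + (-s2) • (1:A)) * (z + s2 • (1:A)) = 0 := by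
        rw [hexp, hab]
        have e1 : -s2 + s2 = 0 := by ring
        have e2 : -s2 * s2 = -a := by rw [← hs2]; ring
        rw [e1, e2, zero_smul, add_zero, neg_smul]
        abel
      have hzscal : ∃ t : ℝ, z = t • (1:A) := by
        rcases mul_eq_zero.1 key with h | h
        · exact ⟨s2, by linear_combination (norm := module) h⟩
        · exact ⟨-s2, by rw [neg_smul]; linear_combination (norm := module) h⟩
      obtain ⟨t, ht⟩ := hzscal
      have hc : z * i = i * z := by
        rw [ht, smul_mul_assoc, mul_smul_comm, one_mul, mul_one]
      rw [hc] at hzi'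
      have h0 : i * z + i * z = 0 := add_eq_zero_iff_eq_neg.2 hzi'
      rw [← two_smul ℝ] at h0
      rcases smul_eq_zero.1 h0 with h3 | h3
      · norm_num at h3
      · rcases mul_eq_zero.1 h3 with h4 | h4
        exacts [hine h4, hzne h4]
    -- normalize z to j with j * j = -1
    set t := Real.sqrt (-a) with htd
    have ht : 0 < t := Real.sqrt_pos.2 (by linarith)
    have ht2 : t * t = -a := Real.mul_self_sqrt (by linarith)
    set j := t⁻¹ • z with hjd
    have hj2 : j * j = -1 := by
      rw [hjd, smul_mul_assoc, mul_smul_comm, smul_smul, hab, smul_smul]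
      have : t⁻¹ * t⁻¹ * a = -1 := by
        field_simp
        linarith
      rw [this, neg_smul, one_smul]
    have hji : j * i = -(i * j) := by
      rw [hjd, smul_mul_assoc, mul_smul_comm, hzi', smul_neg]
    -- the quaternion basis
    set q : QuaternionAlgebra.Basis A (-1 : ℝ) (0 : ℝ) (-1 : ℝ) :=
      { i := i, j := j, k := i * j
        i_mul_i := by rw [hi2, neg_smul, one_smul, zero_smul, add_zero]
        j_mul_j := by rw [hj2, neg_smul, one_smul]
        i_mul_j := rfl
        j_mul_i := by rw [hji, zero_smul, zero_sub] } with hq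
    let F : Quaternion ℝ →ₐ[ℝ] A := q.liftHom
    have hFi : Function.Injective F := F.toRingHom.injective
    have hFs : Function.Surjective F := by
      intro v
      set p := (2⁻¹ : ℝ) • (v - i * v * i) with hpd
      set n := (2⁻¹ : ℝ) • (v + i * v * i) with hnd
      have hpn : p + n = v := by
        rw [hpd, hnd]
        module
      have e1 : i * v * i * i = -(i * v) := by
        rw [mul_assoc (i * v), hi2, mul_neg_one]
      have e2 : i * (i * v * i) = -(v * i) := by
        rw [show i * (i * v * i) = (i * i) * (v * i) by noncomm_ring, hi2, neg_one_mul]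
      have hpi : p * i = i * p := by
        rw [hpd, smul_mul_assoc, mul_smul_comm, sub_mul, mul_sub, e1, e2]
        congr 1
        abel
      have hni : n * i = -(i * n) := by
        rw [hnd, smul_mul_assoc, mul_smul_comm, add_mul, mul_add, e1, e2, ← smul_neg]
        congr 1
        abel
      obtain ⟨a', b', hab'⟩ := hP p hpi
      have hnji : (n * j) * i = i * (n * j) := by
        calc (n * j) * i = n * (j * i) := mul_assoc _ _ _
          _ = -(n * (i * j)) := by rw [hji, mul_neg]
          _ = -((n * i) * j) := by rw [mul_assoc]
          _ = (i * n) * j := by rw [hni, neg_mul, neg_neg]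
          _ = i * (n * j) := mul_assoc _ _ _
      obtain ⟨c', d', hcd'⟩ := hP (n * j) hnji
      have hn : n = -(c' • j) + -(d' • (i * j)) := by
        have h1 : (n * j) * j = -n := by rw [mul_assoc, hj2, mul_neg_one]
        rw [hcd', add_mul, smul_mul_assoc, smul_mul_assoc, one_mul] at h1
        linear_combination (norm := module) h1
      refine ⟨(⟨a', b', -c', -d'⟩ : QuaternionAlgebra ℝ (-1) 0 (-1)), ?_⟩
      show q.liftHom _ = v
      rw [QuaternionAlgebra.Basis.liftHom_apply]
      show algebraMap ℝ A a' + b' • q.i + (-c') • q.j + (-d') • q.k = v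
      rw [Algebra.algebraMap_eq_smul_one]
      show a' • (1:A) + b' • i + (-c') • j + (-d') • (i * j) = v
      rw [← hpn, hab', hn]
      module
    exact ⟨(AlgEquiv.ofBijective F ⟨hFi, hFs⟩).symm⟩

end FrobeniusAux


/-- Frobenius' theorem: a nonzero finite-dimensional associative `ℝ`-algebra with no
zero divisors (whose center contains `ℝ`) is isomorphic as an `ℝ`-algebra to `ℝ`,
`ℂ`, or the quaternions `ℍ`; in particular its dimension is `1`, `2`, or `4`. -/
theorem stmt_13 {A : Type*} [Ring A] [Algebra ℝ A] [FiniteDimensional ℝ A] [Nontrivial A]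
    (hnzd : ∀ x y : A, x * y = 0 → x = 0 ∨ y = 0) :
    (Nonempty (A ≃ₐ[ℝ] ℝ) ∨ Nonempty (A ≃ₐ[ℝ] ℂ) ∨ Nonempty (A ≃ₐ[ℝ] Quaternion ℝ)) ∧
    (Module.finrank ℝ A = 1 ∨ Module.finrank ℝ A = 2 ∨ Module.finrank ℝ A = 4) := by
  haveI : NoZeroDivisors A := ⟨fun {a b} h => hnzd a b h⟩
  haveI : IsDomain A := NoZeroDivisors.to_isDomain A
  rcases frob_aux (A := A) with h | h | h
  · obtain ⟨e⟩ := h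
    exact ⟨Or.inl ⟨e⟩, Or.inl (e.toLinearEquiv.finrank_eq.trans (Module.finrank_self ℝ))⟩
  · obtain ⟨e⟩ := h
    exact ⟨Or.inr (Or.inl ⟨e⟩),
      Or.inr (Or.inl (e.toLinearEquiv.finrank_eq.trans Complex.finrank_real_complex))⟩
  · obtain ⟨e⟩ := h
    exact ⟨Or.inr (Or.inr ⟨e⟩),
      Or.inr (Or.inr (e.toLinearEquiv.finrank_eq.trans Quaternion.finrank_eq_four))⟩
end
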